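/- Let q ≥ 2 and c, C ≥ 0 be real numbers, and let (a_s)_{s ∈ ℤ_{≥0}} be a nonincreasing sequence of nonnegative real numbers with a₀ ≤ c. Suppose there exists an integer m such that a_s ≤ q⁻¹·a_{s−1} + C·q^{−s} for every integer s with 2 ≤ s ≤ m−1, and a_s ≤ q⁻¹·a_{s−1} for every integer s ≥ m+2. Then a_s ≤ (cq + C)·(s+1)·q^{2−s} for every integer s ≥ 0. -/
import Mathlib


/-- Elementary recursion estimate: Let `q ≥ 2` and `c, C ≥ 0` be real
numbers, and let `(a_s)_{s ∈ ℤ_{≥0}}` be a nonincreasing sequence of nonnegative reals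
with `a₀ ≤ c`. Suppose there is an integer `m` such that
`a_s ≤ q⁻¹·a_{s−1} + C·q^{−s}` for all integers `2 ≤ s ≤ m−1`, and
`a_s ≤ q⁻¹·a_{s−1}` for all integers `s ≥ m+2`. Then
`a_s ≤ (cq + C)·(s+1)·q^{2−s}` for every integer `s ≥ 0`. -/
theorem statement10 (q : ℝ) (hq : 2 ≤ q) (c C : ℝ) (hc : 0 ≤ c) (hC : 0 ≤ C)
    (a : ℕ → ℝ) (ha_nonneg : ∀ s, 0 ≤ a s) (ha_anti : ∀ s, a (s + 1) ≤ a s)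
    (ha0 : a 0 ≤ c)
    (hm : ∃ m : ℤ,
      (∀ s : ℕ, 2 ≤ s → (s : ℤ) ≤ m - 1 → a s ≤ q⁻¹ * a (s - 1) + C * q ^ (-(s : ℝ))) ∧
      (∀ s : ℕ, m + 2 ≤ (s : ℤ) → a s ≤ q⁻¹ * a (s - 1))) :
    ∀ s : ℕ, a s ≤ (c * q + C) * ((s : ℝ) + 1) * q ^ ((2 : ℝ) - (s : ℝ)) := by
  obtain ⟨m, h1, h2⟩ := hm
  have hq0 : (0 : ℝ) < q := by linarith
  have hq1 : (1 : ℝ) ≤ q := by linarith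
  set b : ℕ → ℕ := fun s =>
    (if 2 ≤ m ∧ m ≤ (s : ℤ) then 1 else 0) +
      (if 2 ≤ m + 1 ∧ m + 1 ≤ (s : ℤ) then 1 else 0) with hb
  have hb2 : ∀ s, b s ≤ 2 := by
    intro s; simp only [hb]; split_ifs <;> omega
  have hmul : ∀ x : ℝ, q⁻¹ * q ^ x = q ^ (x - 1) := by
    intro x
    rw [show x - 1 = -1 + x by ring, Real.rpow_add hq0, Real.rpow_neg_one]
  have key : ∀ s : ℕ, a s ≤ (c * q + C * s) * q ^ ((b s : ℝ) - (s : ℝ)) := by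
    intro s
    induction s with
    | zero =>
      have hb0 : b 0 = 0 := by simp only [hb]; split_ifs <;> omega
      rw [hb0]
      norm_num [Real.rpow_zero]
      nlinarith
    | succ s ih =>
      have hpow_nonneg : ∀ x : ℝ, 0 ≤ q ^ x := fun x => (Real.rpow_pos_of_pos hq0 x).le
      by_cases hA : m + 2 ≤ ((s + 1 : ℕ) : ℤ)
      · -- geometric decay case
        have hbt : b (s + 1) = b s := by simp only [hb]; split_ifs <;> omega
        have hrec := h2 (s + 1) hA
        simp only [Nat.add_sub_cancel] at hrec
        calc a (s + 1) ≤ q⁻¹ * a s := hrec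
          _ ≤ q⁻¹ * ((c * q + C * s) * q ^ ((b s : ℝ) - (s : ℝ))) := by
              apply mul_le_mul_of_nonneg_left ih (by positivity)
          _ = (c * q + C * s) * q ^ ((b s : ℝ) - (s : ℝ) - 1) := by
              rw [← hmul]; ring
          _ ≤ (c * q + C * (s + 1 : ℕ)) * q ^ ((b (s + 1) : ℝ) - ((s + 1 : ℕ) : ℝ)) := by
              apply mul_le_mul
              · push_cast; nlinarith
              · apply le_of_eq; congr 1; rw [hbt]; push_cast; ring
              · exact hpow_nonneg _
              · push_cast; nlinarith
      · by_cases hB : 2 ≤ s + 1 ∧ ((s + 1 : ℕ) : ℤ) ≤ m - 1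
        · -- recursion with C term
          have hbt : b (s + 1) = b s := by simp only [hb]; split_ifs <;> omega
          have hrec := h1 (s + 1) hB.1 hB.2
          simp only [Nat.add_sub_cancel] at hrec
          have hC' : C * q ^ (-((s + 1 : ℕ) : ℝ)) ≤ C * q ^ ((b s : ℝ) - (s : ℝ) - 1) := by
            apply mul_le_mul_of_nonneg_left _ hC
            apply Real.rpow_le_rpow_of_exponent_le hq1
            have : (0 : ℝ) ≤ (b s : ℝ) := Nat.cast_nonneg _
            push_cast; linarith
          calc a (s + 1) ≤ q⁻¹ * a s + C * q ^ (-((s + 1 : ℕ) : ℝ)) := hrec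
            _ ≤ q⁻¹ * ((c * q + C * s) * q ^ ((b s : ℝ) - (s : ℝ)))
                + C * q ^ ((b s : ℝ) - (s : ℝ) - 1) := by
                exact add_le_add (mul_le_mul_of_nonneg_left ih (by positivity)) hC'
            _ = (c * q + C * (s + 1)) * q ^ ((b s : ℝ) - (s : ℝ) - 1) := by
                rw [← hmul]; ring
            _ = (c * q + C * (s + 1 : ℕ)) * q ^ ((b (s + 1) : ℝ) - ((s + 1 : ℕ) : ℝ)) := by
                congr 1 <;> [skip; rw [hbt]] <;> push_cast <;> ring_nf
        · -- bad case: only monotonicity available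
          by_cases hs0 : s = 0
          · subst hs0
            have ha1 : a 1 ≤ c := le_trans (ha_anti 0) ha0
            have hqe : q ^ ((-1 : ℝ)) ≤ q ^ ((b 1 : ℝ) - ((1 : ℕ) : ℝ)) := by
              apply Real.rpow_le_rpow_of_exponent_le hq1
              have : (0 : ℝ) ≤ (b 1 : ℝ) := Nat.cast_nonneg _
              push_cast; linarith
            have h1' : c = (c * q) * q ^ ((-1 : ℝ)) := by
              rw [Real.rpow_neg_one]; field_simp
            calc a 1 ≤ c := ha1
              _ = (c * q) * q ^ ((-1 : ℝ)) := h1'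
              _ ≤ (c * q + C * (1 : ℕ)) * q ^ ((b 1 : ℝ) - ((1 : ℕ) : ℝ)) := by
                  apply mul_le_mul _ hqe (hpow_nonneg _) (by push_cast; nlinarith)
                  push_cast; nlinarith
          · -- s ≥ 1, so s+1 ≥ 2 and s+1 ∈ {m, m+1}
            have hs1 : 1 ≤ s := Nat.one_le_iff_ne_zero.mpr hs0
            have hbt : b (s + 1) = b s + 1 := by
              simp only [hb]; split_ifs <;> omega
            calc a (s + 1) ≤ a s := ha_anti s
              _ ≤ (c * q + C * s) * q ^ ((b s : ℝ) - (s : ℝ)) := ih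
              _ ≤ (c * q + C * (s + 1 : ℕ)) * q ^ ((b (s + 1) : ℝ) - ((s + 1 : ℕ) : ℝ)) := by
                  apply mul_le_mul
                  · push_cast; nlinarith
                  · apply le_of_eq; congr 1; rw [hbt]; push_cast; ring
                  · exact hpow_nonneg _
                  · push_cast; nlinarith
  intro s
  have hk := key s
  have hcoef : c * q + C * s ≤ (c * q + C) * ((s : ℝ) + 1) := by
    have : (0 : ℝ) ≤ (s : ℝ) := Nat.cast_nonneg _
    nlinarith [mul_nonneg (mul_nonneg hc (by linarith : (0:ℝ) ≤ q)) this, mul_nonneg hC this]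
  have hexp : q ^ ((b s : ℝ) - (s : ℝ)) ≤ q ^ ((2 : ℝ) - (s : ℝ)) := by
    apply Real.rpow_le_rpow_of_exponent_le hq1
    have : (b s : ℝ) ≤ 2 := by exact_mod_cast hb2 s
    linarith
  calc a s ≤ (c * q + C * s) * q ^ ((b s : ℝ) - (s : ℝ)) := hk
    _ ≤ (c * q + C) * ((s : ℝ) + 1) * q ^ ((2 : ℝ) - (s : ℝ)) := by
        apply mul_le_mul hcoef hexp ((Real.rpow_pos_of_pos hq0 _).le)
        have : (0 : ℝ) ≤ (s : ℝ) := Nat.cast_nonneg _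
        nlinarith
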